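/- For 0 ≤ i < r, p = γ·log(l)/l with γ ≥ 1, and lc = (1+ε)·ra, one has (1 − p)^(l − ia/c) ≤ l^(−ε/(1+ε)). -/

import Mathlib

open Real

/-- For 0 ≤ i < r, p = γ log l / l with γ ≥ 1, and lc/a = (1+ε) r, one has
    (1 - p)^(l - ia/c) ≤ l^(-ε/(1+ε)). -/
theorem one_sub_p_pow_bound (l γ ε : ℝ) (hl : 2 ≤ l) (hγ : 1 ≤ γ) (hε : 0 < ε)
    (a c r i : ℕ) (ha : 0 < a) (hc : 0 < c) (hir : i < r)
    (hrel : l * (c : ℝ) / (a : ℝ) = (1 + ε) * (r : ℝ))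
    (hp1 : γ * Real.log l / l ≤ 1) :
    (1 - γ * Real.log l / l) ^ (l - (i : ℝ) * (a : ℝ) / (c : ℝ)) ≤
      l ^ (-(ε / (1 + ε))) := by
  have hl0 : (0:ℝ) < l := by linarith
  have hlog : 0 < Real.log l := Real.log_pos (by linarith)
  have ha0 : (0:ℝ) < a := by exact_mod_cast ha
  have hc0 : (0:ℝ) < c := by exact_mod_cast hc
  have hε1 : (0:ℝ) < 1 + ε := by linarith
  set p := γ * Real.log l / l with hpdef
  set m := l - (i : ℝ) * (a : ℝ) / (c : ℝ) with hmdef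
  have hp0 : 0 < p := by
    apply div_pos _ hl0
    exact mul_pos (by linarith) hlog
  -- key: r*a/c = l/(1+ε)
  have hra : (r : ℝ) * a / c = l / (1 + ε) := by
    field_simp at hrel ⊢
    nlinarith [hrel]
  have hir' : (i : ℝ) ≤ (r : ℝ) := by exact_mod_cast hir.le
  have hm : ε / (1 + ε) * l ≤ m := by
    have h1 : (i : ℝ) * a / c ≤ (r : ℝ) * a / c := by
      gcongr
    rw [hra] at h1
    have : l - l / (1 + ε) = ε / (1 + ε) * l := by field_simp; ring
    rw [hmdef]; linarith
  have hm0 : 0 ≤ m := le_trans (by positivity) hm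
  have hbase : 0 ≤ 1 - p := by linarith
  have h1 : (1 - p) ^ m ≤ Real.exp (-p) ^ m := by
    apply Real.rpow_le_rpow hbase _ hm0
    linarith [Real.add_one_le_exp (-p)]
  have h2 : Real.exp (-p) ^ m = Real.exp (-(p * m)) := by
    rw [Real.rpow_def_of_pos (Real.exp_pos _), Real.log_exp]; ring_nf
  have hpm : ε / (1 + ε) * Real.log l ≤ p * m := by
    have hplb : Real.log l / l ≤ p := by
      rw [hpdef]
      gcongr ?_ / l
      nlinarith
    calc ε / (1 + ε) * Real.log l = (Real.log l / l) * (ε / (1 + ε) * l) := by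
          field_simp
      _ ≤ p * m := by
          apply mul_le_mul hplb hm (by positivity)
          exact hp0.le
  have h3 : Real.exp (-(p * m)) ≤ l ^ (-(ε / (1 + ε))) := by
    rw [Real.rpow_def_of_pos hl0, Real.exp_le_exp]
    nlinarith
  calc (1 - p) ^ m ≤ Real.exp (-p) ^ m := h1
    _ = Real.exp (-(p * m)) := h2
    _ ≤ l ^ (-(ε / (1 + ε))) := h3
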